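/- There exists an integral domain in which every maximal ideal is principal but which is not a principal ideal domain; equivalently, the MIP condition is strictly weaker than the condition that every prime ideal is principal. -/

import Mathlib

open PowerSeries

/-- The ring `ℤ + X·ℚ⟦X⟧`: power series over `ℚ` with integer constant coefficient. -/
noncomputable def Rsub : Subring (PowerSeries ℚ) :=
  Subring.comap (PowerSeries.constantCoeff (R := ℚ)) (Int.castRingHom ℚ).range

lemma mem_Rsub {f : PowerSeries ℚ} : f ∈ Rsub ↔ ∃ k : ℤ, (k : ℚ) = constantCoeff (R := ℚ) f := by
  simp [Rsub, Subring.mem_comap, RingHom.mem_range]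

/-- constant coefficient as a ring hom on `Rsub`. -/
noncomputable def ψ : Rsub →+* ℚ := (constantCoeff (R := ℚ)).comp Rsub.subtype

lemma ψ_apply (h : Rsub) : ψ h = constantCoeff (R := ℚ) (h : PowerSeries ℚ) := rfl

lemma ψ_intCast (n : ℤ) : ψ (n : Rsub) = (n : ℚ) := by
  simp [ψ_apply]

/-- any nonzero integer divides any element of `Rsub` with zero constant coefficient. -/
lemma int_dvd_of_cc_zero (n : ℤ) (hn : n ≠ 0) (h : Rsub) (hh : ψ h = 0) :
    (n : Rsub) ∣ h := by
  have hnq : (n : ℚ) ≠ 0 := Int.cast_ne_zero.mpr hn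
  have hg : (PowerSeries.C (R := ℚ) (n : ℚ)⁻¹) * (h : PowerSeries ℚ) ∈ Rsub := by
    refine mem_Rsub.2 ⟨0, ?_⟩
    simp [ψ_apply] at hh
    simp [hh]
  refine ⟨⟨_, hg⟩, Subtype.ext ?_⟩
  push_cast
  rw [← mul_assoc]
  have : ((n : ℤ) : PowerSeries ℚ) * PowerSeries.C (R := ℚ) (n : ℚ)⁻¹ = 1 := by
    have : ((n : ℤ) : PowerSeries ℚ) = PowerSeries.C (R := ℚ) (n : ℚ) :=
      (map_intCast (PowerSeries.C (R := ℚ)) n).symm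
    rw [this, ← map_mul, mul_inv_cancel₀ hnq, map_one]
  rw [this, one_mul]

/-- elements of `Rsub` with constant coefficient `1` are units. -/
lemma isUnit_of_cc_one (h : Rsub) (hc : ψ h = 1) : IsUnit h := by
  have hne : constantCoeff (R := ℚ) (h : PowerSeries ℚ) ≠ 0 := by
    rw [← ψ_apply, hc]; norm_num
  have hinv : (h : PowerSeries ℚ)⁻¹ ∈ Rsub := by
    refine mem_Rsub.2 ⟨1, ?_⟩
    rw [PowerSeries.constantCoeff_inv, ← ψ_apply, hc]
    norm_num
  exact IsUnit.of_mul_eq_one (a := h) ⟨_, hinv⟩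
    (Subtype.ext (PowerSeries.mul_inv_cancel _ hne))

lemma span_two_ne_top : Ideal.span ({(2 : Rsub)} : Set Rsub) ≠ ⊤ := by
  intro htop
  have h1 : (1 : Rsub) ∈ Ideal.span ({(2 : Rsub)} : Set Rsub) := htop ▸ Submodule.mem_top
  obtain ⟨t, ht⟩ := Ideal.mem_span_singleton.1 h1
  have := congrArg ψ ht
  rw [map_one, map_mul, show (2 : Rsub) = ((2:ℤ) : Rsub) by push_cast; ring, ψ_intCast] at this
  obtain ⟨a, ha⟩ := mem_Rsub.1 t.2
  rw [ψ_apply] at this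
  rw [← ha] at this
  have h2 : (1 : ℤ) = 2 * a := by exact_mod_cast this
  omega

/-- every maximal ideal contains the kernel of ψ -/
lemma ker_le_maximal (m : Ideal Rsub) (hm : m.IsMaximal) :
    RingHom.ker ψ ≤ m := by
  intro h hh
  rw [RingHom.mem_ker] at hh
  by_contra hmem
  obtain ⟨y, i, him, hyi⟩ := hm.exists_inv hmem
  have hci : ψ i = 1 := by
    have := congrArg ψ hyi
    rw [map_add, map_mul, hh, mul_zero, zero_add, map_one] at this
    exact this
  exact hm.ne_top (m.eq_top_of_isUnit_mem him (isUnit_of_cc_one i hci))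

lemma maximal_principal (m : Ideal Rsub) (hm : m.IsMaximal) : m.IsPrincipal := by
  have hIm := ker_le_maximal m hm
  set J := Ideal.comap (Int.castRingHom Rsub) m with hJ
  obtain ⟨n, hn⟩ := (IsPrincipalIdealRing.principal J).principal
  -- key: every h ∈ m decomposes
  have key : ∀ h : Rsub, h ∈ m → ∃ k : ℤ, k ∈ J ∧ ψ (h - (k : Rsub)) = 0 := by
    intro h hh
    obtain ⟨k, hk⟩ := mem_Rsub.1 h.2
    have hker : ψ (h - (k : Rsub)) = 0 := by
      rw [map_sub, ψ_intCast, ψ_apply, ← hk, sub_self]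
    refine ⟨k, ?_, hker⟩
    have : (k : Rsub) ∈ m := by
      have : (k : Rsub) = h - (h - (k : Rsub)) := by ring
      rw [this]
      exact m.sub_mem hh (hIm hker)
    simpa [hJ, Ideal.mem_comap] using this
  by_cases hn0 : n = 0
  · -- then m ⊆ ker ψ, contradiction with maximality
    exfalso
    have hmker : ∀ h : Rsub, h ∈ m → ψ h = 0 := by
      intro h hh
      obtain ⟨k, hkJ, hker⟩ := key h hh
      rw [hn, hn0] at hkJ
      simp [Ideal.span_singleton_eq_bot.2 rfl] at hkJ
      rw [map_sub, ψ_intCast, hkJ] at hker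
      push_cast at hker
      linarith
    have hle2 : m ≤ Ideal.span ({(2 : Rsub)} : Set Rsub) := by
      intro h hh
      exact Ideal.mem_span_singleton.2
        (int_dvd_of_cc_zero 2 (by norm_num) h (hmker h hh))
    have := hm.eq_of_le span_two_ne_top hle2
    have h2m : (2 : Rsub) ∈ m := by
      rw [this]; exact Ideal.mem_span_singleton.2 dvd_rfl
    have := hmker _ h2m
    rw [show ((2:Rsub)) = ((2:ℤ) : Rsub) by push_cast; ring, ψ_intCast] at this
    norm_num at this
  · refine ⟨⟨(n : Rsub), ?_⟩⟩
    apply le_antisymm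
    · intro h hh
      obtain ⟨k, hkJ, hker⟩ := key h hh
      rw [hn] at hkJ
      obtain ⟨t, ht⟩ := Ideal.mem_span_singleton.1 hkJ
      have h1 : (k : Rsub) ∈ Ideal.span ({((n:ℤ) : Rsub)} : Set Rsub) := by
        refine Ideal.mem_span_singleton.2 ⟨(t : Rsub), ?_⟩
        rw [ht]; push_cast; ring
      have h2 : h - (k : Rsub) ∈ Ideal.span ({((n:ℤ) : Rsub)} : Set Rsub) :=
        Ideal.mem_span_singleton.2 (int_dvd_of_cc_zero n hn0 _ hker)
      have := Ideal.add_mem _ h1 h2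
      simpa using this
    · rw [Submodule.span_le]
      intro x hx
      simp only [Set.mem_singleton_iff] at hx
      subst hx
      have : n ∈ J := by rw [hn]; exact Ideal.mem_span_singleton.2 dvd_rfl
      simpa [hJ, Ideal.mem_comap] using this

lemma Xel_mem : (PowerSeries.X : PowerSeries ℚ) ∈ Rsub := mem_Rsub.2 ⟨0, by simp⟩

lemma ker_not_principal : ¬ (RingHom.ker ψ).IsPrincipal := by
  rintro ⟨g, hg⟩
  have hgmem : g ∈ RingHom.ker ψ := by
    rw [hg]; exact Ideal.mem_span_singleton.2 dvd_rfl
  rw [RingHom.mem_ker, ψ_apply] at hgmem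
  have hXker : (⟨PowerSeries.X, Xel_mem⟩ : Rsub) ∈ RingHom.ker ψ := by
    rw [RingHom.mem_ker, ψ_apply]; simp
  rw [hg] at hXker
  obtain ⟨t, ht⟩ := Ideal.mem_span_singleton.1 hXker
  -- coefficient 1 of X = g * t
  have hc1 : (1 : ℚ) = coeff (R := ℚ) 1 (g : PowerSeries ℚ) * constantCoeff (R := ℚ) (t : PowerSeries ℚ) := by
    have := congrArg (fun z : Rsub => coeff (R := ℚ) 1 (z : PowerSeries ℚ)) ht
    simp only [Subring.coe_mul] at this
    rw [PowerSeries.coeff_one_X, PowerSeries.coeff_one_mul, hgmem, mul_zero, add_zero] at this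
    linarith [this]
  have hg1 : coeff (R := ℚ) 1 (g : PowerSeries ℚ) ≠ 0 := by
    intro h0; rw [h0, zero_mul] at hc1; norm_num at hc1
  -- now the element C(g₁/2)·X
  set r : ℚ := coeff (R := ℚ) 1 (g : PowerSeries ℚ) / 2 with hr
  have hhmem : (PowerSeries.C (R := ℚ) r) * PowerSeries.X ∈ Rsub := mem_Rsub.2 ⟨0, by simp⟩
  have hhker : (⟨_, hhmem⟩ : Rsub) ∈ RingHom.ker ψ := by
    rw [RingHom.mem_ker, ψ_apply]; simp
  rw [hg] at hhker
  obtain ⟨s, hs⟩ := Ideal.mem_span_singleton.1 hhker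
  have hc2 : r = coeff (R := ℚ) 1 (g : PowerSeries ℚ) * constantCoeff (R := ℚ) (s : PowerSeries ℚ) := by
    have := congrArg (fun z : Rsub => coeff (R := ℚ) 1 (z : PowerSeries ℚ)) hs
    simp only [Subring.coe_mul] at this
    rw [PowerSeries.coeff_C_mul, PowerSeries.coeff_one_X, mul_one] at this
    rw [PowerSeries.coeff_one_mul, hgmem, mul_zero, add_zero] at this
    linarith [this]
  -- so constantCoeff s = 1/2, but it's an integer
  obtain ⟨a, ha⟩ := mem_Rsub.1 s.2
  rw [← ha, hr] at hc2
  have h2 : coeff (R := ℚ) 1 (g : PowerSeries ℚ) * (1 : ℚ)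
      = coeff (R := ℚ) 1 (g : PowerSeries ℚ) * ((a : ℚ) * 2) := by
    rw [mul_one]
    calc coeff (R := ℚ) 1 (g : PowerSeries ℚ)
        = (coeff (R := ℚ) 1 (g : PowerSeries ℚ) / 2) * 2 := by ring
      _ = (coeff (R := ℚ) 1 (g : PowerSeries ℚ) * (a : ℚ)) * 2 := by rw [hc2]
      _ = coeff (R := ℚ) 1 (g : PowerSeries ℚ) * ((a : ℚ) * 2) := by ring
  have h3 := mul_left_cancel₀ hg1 h2
  have h4 : (1 : ℤ) = a * 2 := by exact_mod_cast h3
  omega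

/-- There exists an integral domain in which every maximal ideal is
principal but which is not a principal ideal domain; equivalently (since for integral
domains PID is equivalent to every prime ideal being principal), the MIP condition is
strictly weaker than the condition that every prime ideal is principal. -/
theorem exists_mip_not_pid : ∃ (R : Type) (_ : CommRing R) (_ : IsDomain R),
    (∀ I : Ideal R, I.IsMaximal → I.IsPrincipal) ∧
    ¬IsPrincipalIdealRing R ∧
    ¬(∀ I : Ideal R, I.IsPrime → I.IsPrincipal) := by
  refine ⟨Rsub, inferInstance, inferInstance, maximal_principal, ?_, ?_⟩
  · intro h
    exact ker_not_principal (IsPrincipalIdealRing.principal _)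
  · intro h
    exact ker_not_principal (h _ (RingHom.ker_isPrime ψ))
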